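/- Let {σ_i^A}_{i=0,…,d_A²−1} and {σ_j^B}_{j=0,…,d_B²−1} be normalized Hermitian operator bases for d_A×d_A and d_B×d_B matrices respectively. Let W be a Hermitian d_A·d_B × d_A·d_B matrix that is block-positive, i.e. ⟨ψ⊗φ, W(ψ⊗φ)⟩ ≥ 0 for all vectors ψ ∈ ℂ^{d_A}, φ ∈ ℂ^{d_B}. Set w_{ij} = Re(Tr(W·(σ_i^A ⊗ σ_j^B))) and define Λ[λ] = Σ_{i,j} (1/4)·w_{ij}·Tr(σ_i^A·λ)·σ_j^B for d_A×d_A matrices λ. Then Λ is a positive map: for every positive semidefinite d_A×d_A matrix λ, the matrix Λ[λ] is positive semidefinite. -/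

import Mathlib

open Matrix
open scoped Kronecker ComplexOrder

noncomputable section

def IsHermOpBasis {d : ℕ} (σ : Fin (d ^ 2) → Matrix (Fin d) (Fin d) ℂ) : Prop :=
  (∀ i, (σ i).IsHermitian) ∧
  ∀ i j, (σ i * σ j).trace = if i = j then 2 else 0

def vecKron {dA dB : ℕ} (ψ : Fin dA → ℂ) (φ : Fin dB → ℂ) :
    Fin dA × Fin dB → ℂ :=
  fun p => ψ p.1 * φ p.2

lemma recon {d : ℕ} (σ : Fin (d ^ 2) → Matrix (Fin d) (Fin d) ℂ)
    (h : IsHermOpBasis σ) (M : Matrix (Fin d) (Fin d) ℂ) :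
    ∑ i, ((σ i * M).trace) • σ i = (2 : ℂ) • M := by
  rcases Nat.eq_zero_or_pos d with hd | hd
  · subst hd
    have : Subsingleton (Matrix (Fin 0) (Fin 0) ℂ) := by
      constructor; intro a b; ext x; exact absurd x.2 (by omega)
    exact Subsingleton.elim _ _
  · have : Nonempty (Fin (d ^ 2)) := ⟨⟨0, by positivity⟩⟩
    have li : LinearIndependent ℂ σ := by
      rw [Fintype.linearIndependent_iff]
      intro g hg j
      have := congrArg (fun X => (σ j * X).trace) hg
      simp only [Matrix.mul_sum, Matrix.trace_sum, Matrix.mul_smul, Matrix.trace_smul,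
        Matrix.mul_zero, Matrix.trace_zero, h.2, smul_eq_mul, mul_ite, mul_one, mul_zero]
        at this
      simpa [Finset.sum_ite_eq'] using this
    have hcard : Fintype.card (Fin (d ^ 2)) =
        Module.finrank ℂ (Matrix (Fin d) (Fin d) ℂ) := by
      simp [Module.finrank_matrix, sq]
    let b : Module.Basis (Fin (d ^ 2)) ℂ (Matrix (Fin d) (Fin d) ℂ) :=
      basisOfLinearIndependentOfCardEqFinrank li hcard
    have hb : ⇑b = σ := coe_basisOfLinearIndependentOfCardEqFinrank li hcard
    let L : Matrix (Fin d) (Fin d) ℂ →ₗ[ℂ] Matrix (Fin d) (Fin d) ℂ :=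
      { toFun := fun M => ∑ i, ((σ i * M).trace) • σ i
        map_add' := by
          intro x y
          simp [Matrix.mul_add, Matrix.trace_add, add_smul, Finset.sum_add_distrib]
        map_smul' := by
          intro c x
          simp [Matrix.mul_smul, Matrix.trace_smul, smul_smul, Finset.smul_sum] }
    have : L = (2 : ℂ) • LinearMap.id := by
      apply b.ext
      intro j
      simp only [hb, LinearMap.smul_apply, LinearMap.id_apply, L, LinearMap.coe_mk,
        AddHom.coe_mk, h.2]
      simp [ite_smul, Finset.sum_ite_eq']
    exact congrFun (congrArg (fun f => f.toFun) this) M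

lemma quadform_eq_trace {n : Type*} [Fintype n] (A : Matrix n n ℂ) (x : n → ℂ) :
    star x ⬝ᵥ (A *ᵥ x) = (A * vecMulVec x (star x)).trace := by
  simp only [Matrix.trace, Matrix.diag, Matrix.mul_apply, dotProduct, mulVec,
    vecMulVec_apply, Pi.star_apply]
  apply Finset.sum_congr rfl; intros
  rw [Finset.mul_sum]
  apply Finset.sum_congr rfl; intros; ring

lemma sum_kron_sum {ι κ dA dB : Type*} [Fintype dA] [Fintype dB]
    (s : Finset ι) (t : Finset κ) (A : ι → Matrix dA dA ℂ) (B : κ → Matrix dB dB ℂ) :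
    (∑ i ∈ s, A i) ⊗ₖ (∑ j ∈ t, B j) = ∑ i ∈ s, ∑ j ∈ t, A i ⊗ₖ B j := by
  ext ⟨a, b⟩ ⟨c, d⟩
  simp only [kroneckerMap_apply, Matrix.sum_apply, Finset.sum_mul, Finset.mul_sum]
  rw [Finset.sum_comm]

lemma comm3 {α β γ M : Type*} [AddCommMonoid M] [Fintype α] [Fintype β] [Fintype γ]
    (f : α → β → γ → M) :
    ∑ a, ∑ b, ∑ c, f a b c = ∑ c, ∑ b, ∑ a, f a b c := by
  calc ∑ a, ∑ b, ∑ c, f a b c = ∑ a, ∑ c, ∑ b, f a b c :=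
        Finset.sum_congr rfl fun a _ => Finset.sum_comm
    _ = ∑ c, ∑ a, ∑ b, f a b c := Finset.sum_comm
    _ = ∑ c, ∑ b, ∑ a, f a b c :=
        Finset.sum_congr rfl fun c _ => Finset.sum_comm

lemma vecMulVec_star_herm {n : Type*} (x : n → ℂ) :
    (vecMulVec x (star x))ᴴ = vecMulVec x (star x) := by
  ext i j
  simp [vecMulVec_apply, conjTranspose_apply, mul_comm]


set_option maxRecDepth 4000 in
/-- the map `Λ[λ] = Σᵢⱼ (1/4)·wᵢⱼ·Tr(σᵢᴬ λ)·σⱼᴮ` induced by a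
block-positive Hermitian operator `W` (with `wᵢⱼ = Re Tr(W·(σᵢᴬ ⊗ σⱼᴮ))`)
is a positive map. -/
theorem induced_map_positive
    {dA dB : ℕ}
    (σA : Fin (dA ^ 2) → Matrix (Fin dA) (Fin dA) ℂ) (hA : IsHermOpBasis σA)
    (σB : Fin (dB ^ 2) → Matrix (Fin dB) (Fin dB) ℂ) (hB : IsHermOpBasis σB)
    (W : Matrix (Fin dA × Fin dB) (Fin dA × Fin dB) ℂ) (hW : W.IsHermitian)
    (hblock : ∀ (ψ : Fin dA → ℂ) (φ : Fin dB → ℂ),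
      0 ≤ (star (vecKron ψ φ) ⬝ᵥ (W *ᵥ vecKron ψ φ)).re) :
    ∀ lam : Matrix (Fin dA) (Fin dA) ℂ, lam.PosSemidef →
      (∑ i, ∑ j, (((1 / 4 : ℂ) * ((W * (σA i ⊗ₖ σB j)).trace).re)
        * (σA i * lam).trace) • σB j).PosSemidef := by
  intro lam hlam
  -- realness of the trace coefficients
  have hkronherm : ∀ i j, (σA i ⊗ₖ σB j)ᴴ = σA i ⊗ₖ σB j := by
    intro i j
    ext ⟨a, b⟩ ⟨c, d⟩
    have e1 : star (σA i c a) = σA i a c := by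
      rw [← conjTranspose_apply, (hA.1 i).eq]
    have e2 : star (σB j d b) = σB j b d := by
      rw [← conjTranspose_apply, (hB.1 j).eq]
    simp only [conjTranspose_apply, kroneckerMap_apply, star_mul', e1, e2]
  have htre : ∀ i j, (((W * (σA i ⊗ₖ σB j)).trace.re : ℝ) : ℂ)
      = (W * (σA i ⊗ₖ σB j)).trace := by
    intro i j
    rw [← Complex.conj_eq_iff_re]
    calc (starRingEnd ℂ) (W * (σA i ⊗ₖ σB j)).trace
        = ((W * (σA i ⊗ₖ σB j))ᴴ).trace := (Matrix.trace_conjTranspose _).symm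
      _ = ((σA i ⊗ₖ σB j) * W).trace := by
          rw [conjTranspose_mul, hkronherm, hW.eq]
      _ = (W * (σA i ⊗ₖ σB j)).trace := Matrix.trace_mul_comm _ _
  have hare : ∀ i, (starRingEnd ℂ) ((σA i * lam).trace) = (σA i * lam).trace := by
    intro i
    calc (starRingEnd ℂ) (σA i * lam).trace
        = ((σA i * lam)ᴴ).trace := (Matrix.trace_conjTranspose _).symm
      _ = (lam * σA i).trace := by rw [conjTranspose_mul, (hA.1 i).eq, hlam.1.eq]
      _ = (σA i * lam).trace := Matrix.trace_mul_comm _ _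
  rw [posSemidef_iff_dotProduct_mulVec]
  constructor
  · -- Hermitian
    unfold Matrix.IsHermitian
    rw [conjTranspose_sum]
    apply Finset.sum_congr rfl
    intro i _
    rw [conjTranspose_sum]
    apply Finset.sum_congr rfl
    intro j _
    rw [conjTranspose_smul, (hB.1 j).eq]
    congr 1
    have h14 : (starRingEnd ℂ) (1 / 4 : ℂ) = 1 / 4 := by
      rw [show (1 / 4 : ℂ) = ((1 / 4 : ℝ) : ℂ) by norm_num, Complex.conj_ofReal]
    simp only [star_mul', Complex.star_def, _root_.map_mul, Complex.conj_ofReal,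
      hare i, h14]
    try ring
  · -- positivity
    intro φ
    set P : Matrix (Fin dB) (Fin dB) ℂ := vecMulVec φ (star φ) with hP
    obtain ⟨Bm, hBm⟩ : ∃ B : Matrix (Fin dA) (Fin dA) ℂ, lam = Bᴴ * B := by
      open scoped MatrixOrder in
      exact CStarAlgebra.nonneg_iff_eq_star_mul_self.mp hlam.nonneg
    set x : Fin dA → Fin dA × Fin dB → ℂ :=
      fun k => vecKron (fun a => star (Bm k a)) φ with hx
    -- step 1: quadratic form as a sum of coefficient * trace
    have step1 : star φ ⬝ᵥ ((∑ i, ∑ j, (((1 / 4 : ℂ) * ((W * (σA i ⊗ₖ σB j)).trace).re)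
        * (σA i * lam).trace) • σB j) *ᵥ φ)
        = ∑ i, ∑ j, (1 / 4 : ℂ) * ((σA i * lam).trace *
            (((σB j * P).trace) * (W * (σA i ⊗ₖ σB j)).trace)) := by
      rw [quadform_eq_trace, ← hP]
      simp only [Matrix.sum_mul, Matrix.smul_mul, Matrix.trace_sum, Matrix.trace_smul,
        smul_eq_mul]
      apply Finset.sum_congr rfl; intro i _
      apply Finset.sum_congr rfl; intro j _
      rw [htre i j]
      ring
    -- step 2: collapse the double sum to a single kronecker trace
    have step2 : (W * (lam ⊗ₖ P)).trace
        = ∑ i, ∑ j, (1 / 4 : ℂ) * ((σA i * lam).trace *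
            (((σB j * P).trace) * (W * (σA i ⊗ₖ σB j)).trace)) := by
      have h4 : lam ⊗ₖ P = (1 / 4 : ℂ) •
          (((2 : ℂ) • lam) ⊗ₖ ((2 : ℂ) • P)) := by
        rw [smul_kronecker, kronecker_smul, smul_smul, smul_smul]
        norm_num
      rw [h4, ← recon σA hA lam, ← recon σB hB P, sum_kron_sum]
      simp only [Matrix.mul_smul, Matrix.trace_smul, Matrix.mul_sum, Matrix.trace_sum,
        Finset.smul_sum, smul_kronecker, kronecker_smul, smul_smul, smul_eq_mul]
      apply Finset.sum_congr rfl; intro i _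
      apply Finset.sum_congr rfl; intro j _
      ring
    -- step 3: kronecker trace as a sum of block quadratic forms
    have step3 : (W * (lam ⊗ₖ P)).trace
        = ∑ k, star (x k) ⬝ᵥ (W *ᵥ x k) := by
      rw [hBm]
      simp only [Matrix.trace, Matrix.diag, Matrix.mul_apply, kroneckerMap_apply,
        conjTranspose_apply, dotProduct, mulVec, hx, vecKron, Pi.star_apply, hP,
        vecMulVec_apply, Finset.sum_mul, Finset.mul_sum, star_mul', star_star]
      refine (comm3 _).trans ?_
      apply Finset.sum_congr rfl; intro k _
      rw [Finset.sum_comm]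
      apply Finset.sum_congr rfl; intro p _
      apply Finset.sum_congr rfl; intro q _
      ring
    -- each block quadratic form is nonneg in ℂ
    have hterm : ∀ k, (0 : ℂ) ≤ star (x k) ⬝ᵥ (W *ᵥ x k) := by
      intro k
      have hself : (starRingEnd ℂ) (star (x k) ⬝ᵥ (W *ᵥ x k))
          = star (x k) ⬝ᵥ (W *ᵥ x k) := by
        rw [quadform_eq_trace]
        calc (starRingEnd ℂ) (W * vecMulVec (x k) (star (x k))).trace
            = ((W * vecMulVec (x k) (star (x k)))ᴴ).trace :=
              (Matrix.trace_conjTranspose _).symm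
          _ = (vecMulVec (x k) (star (x k)) * W).trace := by
              rw [conjTranspose_mul, vecMulVec_star_herm, hW.eq]
          _ = _ := Matrix.trace_mul_comm _ _
      rw [Complex.le_def]
      refine ⟨by simpa [hx] using hblock (fun a => star (Bm k a)) φ, ?_⟩
      have := Complex.conj_eq_iff_im.mp hself
      simpa using this.symm
    rw [step1, ← step2, step3]
    exact Finset.sum_nonneg fun k _ => hterm k
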